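/- Let Y and f₁,…,f_K be square-integrable real random variables, and let α be in the probability simplex Δ^K. Define f_ens = ∑ₖ αₖ fₖ. Then E[(f_ens − Y)²] = ∑ₖ αₖ E[(fₖ − Y)²] − ∑ₖ αₖ E[(fₖ − f_ens)²]. -/

import Mathlib

open MeasureTheory

theorem krogh_vedelsby {Ω : Type*} [MeasurableSpace Ω] (μ : Measure Ω)
    [IsProbabilityMeasure μ] (K : ℕ) (Y : Ω → ℝ) (f : Fin K → Ω → ℝ)
    (hY : MemLp Y 2 μ) (hf : ∀ k, MemLp (f k) 2 μ)
    (α : Fin K → ℝ) (hα : ∀ k, 0 ≤ α k) (hsum : ∑ k, α k = 1) :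
    ∫ ω, (∑ k, α k * f k ω - Y ω) ^ 2 ∂μ =
      ∑ k, α k * ∫ ω, (f k ω - Y ω) ^ 2 ∂μ -
        ∑ k, α k * ∫ ω, (f k ω - ∑ j, α j * f j ω) ^ 2 ∂μ := by
  set F : Ω → ℝ := fun ω => ∑ j, α j * f j ω with hF
  have hFmem : MemLp F 2 μ := by
    have h := memLp_finset_sum' Finset.univ (fun j (_ : j ∈ Finset.univ) => (hf j).const_mul (α j))
    have he : F = ∑ i : Fin K, fun x => α i * f i x := by
      funext ω; simp [hF]
    rw [he]; exact h
  have h1 : ∀ k, Integrable (fun ω => (f k ω - Y ω) ^ 2) μ := by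
    intro k
    have := ((hf k).sub hY).integrable_sq
    simpa [sq] using this
  have h2 : ∀ k, Integrable (fun ω => (f k ω - F ω) ^ 2) μ := by
    intro k
    have := ((hf k).sub hFmem).integrable_sq
    simpa [sq] using this
  have hS1 : Integrable (fun ω => ∑ k, α k * (f k ω - Y ω) ^ 2) μ :=
    integrable_finset_sum _ (fun k _ => ((h1 k).const_mul (α k)))
  have hS2 : Integrable (fun ω => ∑ k, α k * (f k ω - F ω) ^ 2) μ :=
    integrable_finset_sum _ (fun k _ => ((h2 k).const_mul (α k)))
  have key : ∀ ω, (F ω - Y ω) ^ 2 =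
      (∑ k, α k * (f k ω - Y ω) ^ 2) - ∑ k, α k * (f k ω - F ω) ^ 2 := by
    intro ω
    rw [← Finset.sum_sub_distrib]
    have : ∀ k ∈ Finset.univ, α k * (f k ω - Y ω) ^ 2 - α k * (f k ω - F ω) ^ 2
        = 2 * (F ω - Y ω) * (α k * f k ω) + ((Y ω) ^ 2 - (F ω) ^ 2) * α k := by
      intro k _; ring
    rw [Finset.sum_congr rfl this, Finset.sum_add_distrib, ← Finset.mul_sum,
      ← Finset.mul_sum, hsum]
    show (F ω - Y ω) ^ 2 = 2 * (F ω - Y ω) * F ω + (Y ω ^ 2 - F ω ^ 2) * 1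
    ring
  calc ∫ ω, (∑ k, α k * f k ω - Y ω) ^ 2 ∂μ
      = ∫ ω, ((∑ k, α k * (f k ω - Y ω) ^ 2) - ∑ k, α k * (f k ω - F ω) ^ 2) ∂μ := by
        exact integral_congr_ae (Filter.Eventually.of_forall (fun ω => key ω))
    _ = (∫ ω, ∑ k, α k * (f k ω - Y ω) ^ 2 ∂μ)
        - ∫ ω, ∑ k, α k * (f k ω - F ω) ^ 2 ∂μ := integral_sub hS1 hS2
    _ = (∑ k, α k * ∫ ω, (f k ω - Y ω) ^ 2 ∂μ)
        - ∑ k, α k * ∫ ω, (f k ω - F ω) ^ 2 ∂μ := by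
        rw [integral_finset_sum _ (fun k _ => (h1 k).const_mul (α k)),
          integral_finset_sum _ (fun k _ => (h2 k).const_mul (α k))]
        simp [MeasureTheory.integral_const_mul]
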